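/- Let φ, α, κ, β_i, γ̃_ij, A_ij, Γ_i be smooth fields on ℝ × ℝ³ satisfying the linearized BSSN evolution equations (E1), (E2), (E4), (E5) and (E6). Then the field A_ij satisfies the wave equation ∂_t∂_t A_ij = Δ A_ij at every point of ℝ × ℝ³ and for all i, j. -/

import Mathlib

noncomputable section

/-- Spacetime ℝ × ℝ³. -/
abbrev Spc : Type := ℝ × (Fin 3 → ℝ)

/-- Time derivative ∂_t. -/
noncomputable def pt (f : Spc → ℝ) : Spc → ℝ :=
  fun p => deriv (fun s => f (s, p.2)) p.1

/-- Spatial partial derivative ∂_i. -/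
noncomputable def ps (i : Fin 3) (f : Spc → ℝ) : Spc → ℝ :=
  fun p => deriv (fun s => f (p.1, Function.update p.2 i s)) (p.2 i)

/-- Spatial Laplacian Δ = Σ_i ∂_i ∂_i. -/
noncomputable def lap (f : Spc → ℝ) : Spc → ℝ :=
  fun p => ∑ i : Fin 3, ps i (ps i f) p

/-- Kronecker delta δ_ij. -/
noncomputable def kron (i j : Fin 3) : ℝ := if i = j then 1 else 0

/-- Directional derivative. -/
noncomputable def pd (v : Spc) (f : Spc → ℝ) : Spc → ℝ := fun p => fderiv ℝ f p v

def tv : Spc := (1, 0)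
def ee (i : Fin 3) : Spc := (0, Pi.single i 1)


open scoped ContDiff in
lemma one_le_inf : ((⊤ : ℕ∞) : WithTop ℕ∞) ≠ 0 := by simp

open scoped ContDiff in
lemma inf_add_one_le : ∞ + 1 ≤ ∞ := by rw [ENat.coe_top_add_one]

lemma pd_smooth {f : Spc → ℝ} (hf : ContDiff ℝ (⊤ : ℕ∞) f) (v : Spc) :
    ContDiff ℝ (⊤ : ℕ∞) (pd v f) :=
  (hf.fderiv_right inf_add_one_le).clm_apply contDiff_const

lemma pt_eq {f : Spc → ℝ} (hf : ContDiff ℝ (⊤ : ℕ∞) f) : pt f = pd tv f := by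
  funext p
  have hg : HasDerivAt (fun s : ℝ => ((s, p.2) : Spc)) tv p.1 :=
    HasDerivAt.prodMk (hasDerivAt_id p.1) (hasDerivAt_const _ _)
  have h := ((hf.differentiable one_le_inf) p).hasFDerivAt.comp_hasDerivAt p.1 hg
  exact h.deriv

lemma ps_eq {f : Spc → ℝ} (hf : ContDiff ℝ (⊤ : ℕ∞) f) (i : Fin 3) :
    ps i f = pd (ee i) f := by
  funext p
  have hu : HasDerivAt (fun s : ℝ => Function.update p.2 i s) (Pi.single i 1) (p.2 i) := by
    rw [hasDerivAt_pi]
    intro j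
    rcases eq_or_ne j i with rfl | hji
    · simpa [Function.update_apply] using (hasDerivAt_id' (x := p.2 j))
    · simpa [Function.update_apply, hji, Pi.single_apply] using
        hasDerivAt_const (p.2 i) (p.2 j)
  have hg : HasDerivAt (fun s : ℝ => ((p.1, Function.update p.2 i s) : Spc)) (ee i) (p.2 i) :=
    HasDerivAt.prodMk (hasDerivAt_const _ _) hu
  have h2 : ((p.1, Function.update p.2 i (p.2 i)) : Spc) = p := by
    simp [Function.update_eq_self]
  have h := ((hf.differentiable one_le_inf) _).hasFDerivAt.comp_hasDerivAt (p.2 i) hg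
  rw [Function.comp_def] at h
  simp only [h2] at h
  exact h.deriv

lemma pd_comm {f : Spc → ℝ} (hf : ContDiff ℝ (⊤ : ℕ∞) f) (v w : Spc) :
    pd v (pd w f) = pd w (pd v f) := by
  have hd : Differentiable ℝ f := hf.differentiable one_le_inf
  have hfd : ContDiff ℝ (⊤ : ℕ∞) (fderiv ℝ f) := hf.fderiv_right inf_add_one_le
  have key : ∀ (u u' : Spc) (p : Spc), pd u (pd u' f) p = fderiv ℝ (fderiv ℝ f) p u u' := by
    intro u u' p
    have h := fderiv_clm_apply ((hfd.differentiable one_le_inf) p) (differentiableAt_const u')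
    show fderiv ℝ (fun y => (fderiv ℝ f y) u') p u = _
    rw [h]
    simp
  funext p
  rw [key v w p, key w v p]
  exact second_derivative_symmetric (fun y => (hd y).hasFDerivAt)
    ((hfd.differentiable one_le_inf p).hasFDerivAt) v w

/-- The submodule of smooth functions. -/
def Sm : Submodule ℝ (Spc → ℝ) where
  carrier := {f | ContDiff ℝ (⊤ : ℕ∞) f}
  add_mem' := by
    intro a b (ha : ContDiff ℝ (⊤ : ℕ∞) a) (hb : ContDiff ℝ (⊤ : ℕ∞) b)
    exact ha.add hb
  zero_mem' := by
    show ContDiff ℝ (⊤ : ℕ∞) (fun _ => (0:ℝ))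
    exact contDiff_const
  smul_mem' := by
    intro c a (ha : ContDiff ℝ (⊤ : ℕ∞) a)
    exact ha.const_smul c

lemma pd_add {f g : Spc → ℝ} (hf : ContDiff ℝ (⊤ : ℕ∞) f) (hg : ContDiff ℝ (⊤ : ℕ∞) g)
    (v : Spc) : pd v (f + g) = pd v f + pd v g := by
  funext p
  show fderiv ℝ (fun q => f q + g q) p v = fderiv ℝ f p v + fderiv ℝ g p v
  rw [fderiv_fun_add ((hf.differentiable one_le_inf) p)
    ((hg.differentiable one_le_inf) p)]
  rfl

lemma pd_smul {f : Spc → ℝ} (hf : ContDiff ℝ (⊤ : ℕ∞) f) (c : ℝ) (v : Spc) :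
    pd v (c • f) = c • pd v f := by
  funext p
  show fderiv ℝ (fun q => c • f q) p v = c • fderiv ℝ f p v
  rw [fderiv_fun_const_smul ((hf.differentiable one_le_inf) p)]
  rfl

/-- Directional derivative as a linear map on smooth functions. -/
noncomputable def D (v : Spc) : Sm →ₗ[ℝ] Sm where
  toFun f := ⟨pd v f.1, pd_smooth f.2 v⟩
  map_add' f g := Subtype.ext (pd_add f.2 g.2 v)
  map_smul' c f := Subtype.ext (pd_smul f.2 c v)

@[simp] lemma D_coe (v : Spc) (x : Sm) : ((D v x : Sm) : Spc → ℝ) = pd v (x : Spc → ℝ) := rfl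

lemma Dcomm (v w : Spc) (x : Sm) : D v (D w x) = D w (D v x) :=
  Subtype.ext (pd_comm x.2 v w)

lemma Dcomm3 (u v w : Spc) (x : Sm) : D u (D v (D w x)) = D v (D w (D u x)) := by
  rw [Dcomm u v, Dcomm u w]

/-- Laplacian as a linear map on smooth functions. -/
noncomputable def Lop : Sm →ₗ[ℝ] Sm := ∑ l : Fin 3, (D (ee l)).comp (D (ee l))

lemma Lop_apply (x : Sm) : Lop x = ∑ l : Fin 3, D (ee l) (D (ee l) x) := by
  simp [Lop]

lemma commL (u : Spc) (x : Sm) : D u (Lop x) = Lop (D u x) := by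
  rw [Lop_apply, Lop_apply, map_sum]
  exact Finset.sum_congr rfl fun l _ => Dcomm3 u (ee l) (ee l) x

lemma lap_eq {f : Spc → ℝ} (hf : ContDiff ℝ (⊤ : ℕ∞) f) :
    lap f = fun p => ∑ l : Fin 3, pd (ee l) (pd (ee l) f) p := by
  funext p
  simp only [lap]
  refine Finset.sum_congr rfl fun l _ => ?_
  rw [ps_eq hf l, ps_eq (pd_smooth hf (ee l)) l]

lemma Lop_coe (x : Sm) (p : Spc) :
    ((Lop x : Sm) : Spc → ℝ) p = ∑ l : Fin 3, pd (ee l) (pd (ee l) (x : Spc → ℝ)) p := by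
  rw [Lop_apply]
  rw [AddSubmonoidClass.coe_finset_sum]
  simp [Finset.sum_apply]

/-- If the linearized BSSN evolution equations (E1), (E2), (E4), (E5), (E6) hold for
smooth fields, then `A_ij` satisfies the wave equation `∂_t∂_t A_ij = Δ A_ij`. -/
theorem A_wave_equation
    (φ α κ : Spc → ℝ) (β Γ : Fin 3 → Spc → ℝ)
    (γ A : Fin 3 → Fin 3 → Spc → ℝ)
    (hφ : ContDiff ℝ (⊤ : ℕ∞) φ) (hα : ContDiff ℝ (⊤ : ℕ∞) α)
    (hκ : ContDiff ℝ (⊤ : ℕ∞) κ)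
    (hβ : ∀ i, ContDiff ℝ (⊤ : ℕ∞) (β i)) (hΓ : ∀ i, ContDiff ℝ (⊤ : ℕ∞) (Γ i))
    (hγ : ∀ i j, ContDiff ℝ (⊤ : ℕ∞) (γ i j)) (hA : ∀ i j, ContDiff ℝ (⊤ : ℕ∞) (A i j))
    (hγsym : ∀ i j, γ i j = γ j i) (hAsym : ∀ i j, A i j = A j i)
    (E1 : ∀ p, pt φ p = -(1/6) * κ p + (1/6) * ∑ l, ps l (β l) p)
    (E2 : ∀ p, pt α p = -κ p)
    (E4 : ∀ i j p, pt (γ i j) p =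
      -2 * A i j p + ps i (β j) p + ps j (β i) p
        - (2/3) * kron i j * ∑ l, ps l (β l) p)
    (E5 : ∀ i j p, pt (A i j) p =
      -(1/2) * lap (γ i j) p + (1/2) * (ps i (Γ j) p + ps j (Γ i) p)
        - 2 * ps i (ps j φ) p - 2 * kron i j * lap φ p
        - ps i (ps j α) p + (1/3) * kron i j * lap α p)
    (E6 : ∀ i p, pt (Γ i) p =
      -(4/3) * ps i κ p + (1/3) * ps i (fun q => ∑ l, ps l (β l) q) p + lap (β i) p) :
    ∀ i j p, pt (pt (A i j)) p = lap (A i j) p := by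
  intro i j p
  let Φ : Sm := ⟨φ, hφ⟩
  let Aα : Sm := ⟨α, hα⟩
  let K : Sm := ⟨κ, hκ⟩
  let B : Fin 3 → Sm := fun l => ⟨β l, hβ l⟩
  let GΓ : Fin 3 → Sm := fun l => ⟨Γ l, hΓ l⟩
  let G : Sm := ⟨γ i j, hγ i j⟩
  let AA : Sm := ⟨A i j, hA i j⟩
  let S : Sm := ∑ l : Fin 3, D (ee l) (B l)
  have cΦ : ((Φ : Sm) : Spc → ℝ) = φ := rfl
  have cAα : ((Aα : Sm) : Spc → ℝ) = α := rfl
  have cK : ((K : Sm) : Spc → ℝ) = κ := rfl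
  have cB : ∀ l, ((B l : Sm) : Spc → ℝ) = β l := fun l => rfl
  have cΓ : ∀ l, ((GΓ l : Sm) : Spc → ℝ) = Γ l := fun l => rfl
  have cG : ((G : Sm) : Spc → ℝ) = γ i j := rfl
  have cAA : ((AA : Sm) : Spc → ℝ) = A i j := rfl
  have cS : ((S : Sm) : Spc → ℝ) = fun q => ∑ l : Fin 3, pd (ee l) (β l) q := by
    funext q
    rw [AddSubmonoidClass.coe_finset_sum, Finset.sum_apply]
    exact Finset.sum_congr rfl fun l _ => rfl
  have hsum : ∀ q, (∑ l : Fin 3, ps l (β l) q) = ∑ l : Fin 3, pd (ee l) (β l) q :=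
    fun q => Finset.sum_congr rfl fun l _ => by rw [ps_eq (hβ l) l]
  have hSfun : (fun q => ∑ l : Fin 3, ps l (β l) q) = ((S : Sm) : Spc → ℝ) := by
    rw [cS]; funext q; exact hsum q
  have hE1sm : D tv Φ = (-(1/6) : ℝ) • K + ((1/6 : ℝ)) • S := by
    apply Subtype.ext; funext q
    have h := E1 q
    rw [pt_eq hφ, hsum q] at h
    simp only [D_coe, Submodule.coe_add, Submodule.coe_smul, Pi.add_apply, Pi.smul_apply,
      smul_eq_mul, cΦ, cK, cS]
    linear_combination h
  have hE2sm : D tv Aα = (-1 : ℝ) • K := by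
    apply Subtype.ext; funext q
    have h := E2 q
    rw [pt_eq hα] at h
    simp only [D_coe, Submodule.coe_smul, Pi.smul_apply, smul_eq_mul, cAα, cK]
    linear_combination h
  have hE4sm : D tv G = (-2 : ℝ) • AA + D (ee i) (B j) + D (ee j) (B i)
      - ((2/3) * kron i j : ℝ) • S := by
    apply Subtype.ext; funext q
    have h := E4 i j q
    rw [pt_eq (hγ i j), ps_eq (hβ j) i, ps_eq (hβ i) j, hsum q] at h
    simp only [D_coe, Submodule.coe_add, AddSubgroupClass.coe_sub, Submodule.coe_smul,
      Pi.add_apply, Pi.sub_apply, Pi.smul_apply, smul_eq_mul, cG, cAA, cB, cS]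
    linear_combination h
  have hE6sm : ∀ m, D tv (GΓ m) = (-(4/3) : ℝ) • D (ee m) K + ((1/3 : ℝ)) • D (ee m) S
      + Lop (B m) := by
    intro m
    apply Subtype.ext; funext q
    have h := E6 m q
    rw [pt_eq (hΓ m), ps_eq hκ m, hSfun, ps_eq S.2 m, lap_eq (hβ m)] at h
    simp only [] at h
    simp only [D_coe, Submodule.coe_add, Submodule.coe_smul, Pi.add_apply, Pi.smul_apply,
      smul_eq_mul, cΓ, cK, cB, Lop_coe]
    linear_combination h
  have hE5sm : D tv AA = (-(1/2) : ℝ) • Lop G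
      + ((1/2 : ℝ)) • (D (ee i) (GΓ j) + D (ee j) (GΓ i))
      - (2 : ℝ) • D (ee i) (D (ee j) Φ) - ((2 * kron i j : ℝ)) • Lop Φ
      - D (ee i) (D (ee j) Aα) + ((1/3) * kron i j : ℝ) • Lop Aα := by
    apply Subtype.ext; funext q
    have h := E5 i j q
    rw [pt_eq (hA i j), lap_eq (hγ i j), lap_eq hφ, lap_eq hα, ps_eq (hΓ j) i,
      ps_eq (hΓ i) j, ps_eq hφ j, ps_eq (pd_smooth hφ (ee j)) i, ps_eq hα j,
      ps_eq (pd_smooth hα (ee j)) i] at h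
    simp only [] at h
    simp only [D_coe, Submodule.coe_add, AddSubgroupClass.coe_sub, Submodule.coe_smul,
      Pi.add_apply, Pi.sub_apply, Pi.smul_apply, smul_eq_mul, cG, cΦ, cAα, cAA, cΓ, Lop_coe]
    linear_combination h
  have key : D tv (D tv AA) = Lop AA := by
    rw [hE5sm]
    simp only [map_add, map_sub, map_smul, map_neg, commL, Dcomm tv]
    rw [hE4sm, hE6sm j, hE6sm i, hE1sm, hE2sm]
    simp only [map_add, map_sub, map_smul, map_neg, commL]
    rw [Dcomm (ee j) (ee i) K, Dcomm (ee j) (ee i) S]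
    module
  have hfin := congrArg (fun x : Sm => (x : Spc → ℝ) p) key
  simp only [D_coe, Lop_coe, cAA] at hfin
  rw [pt_eq (hA i j), pt_eq (pd_smooth (hA i j) tv), lap_eq (hA i j)]
  exact hfin
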